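/- Let ξ ∈ ℝ³ be nonzero, let w₁, …, w_{m+1} ∈ ξ^⊥ with any two linearly independent, and fix 0 ≤ l ≤ m with l ≥ 2. Suppose w_{k₁}, …, w_{k_{l+1}} give l+1 linearly independent tensors among { w_k^{⊙l} ⊙ ξ^{⊙(m-l)} }. Then w_{k₁}^{⊙l} ⊙ ξ^{⊙(m-l)} cannot be written as a linear combination of the tensors w_i^{⊙p} ⊙ ξ^{⊙(m-p)} with p ≠ l (all i) together with the remaining tensors w_{k_j}^{⊙l} ⊙ ξ^{⊙(m-l)}, j = 2, …, l+1. -/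

import Mathlib

def dot3 (u v : Fin 3 → ℝ) : ℝ := ∑ i, u i * v i

/-- The symmetric tensor w^{⊙p} ⊙ ξ^{⊙(m-p)} in Sym^m(ℝ³), modeled faithfully as
the polynomial function y ↦ ⟨w,y⟩^p ⟨ξ,y⟩^{m-p}. -/
noncomputable def symMix (m p : ℕ) (w ξ : Fin 3 → ℝ) : (Fin 3 → ℝ) → ℝ :=
  fun y => (dot3 w y) ^ p * (dot3 ξ y) ^ (m - p)

lemma dot3_add_right (u a b : Fin 3 → ℝ) : dot3 u (a + b) = dot3 u a + dot3 u b := by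
  simp [dot3, mul_add, Finset.sum_add_distrib]

lemma dot3_sub_right (u a b : Fin 3 → ℝ) : dot3 u (a - b) = dot3 u a - dot3 u b := by
  simp [dot3, mul_sub, Finset.sum_sub_distrib]

lemma dot3_smul_right (u : Fin 3 → ℝ) (s : ℝ) (a : Fin 3 → ℝ) :
    dot3 u (s • a) = s * dot3 u a := by
  simp [dot3, Finset.mul_sum]
  apply Finset.sum_congr rfl
  intro i _
  ring

lemma dot3_self_pos {ξ : Fin 3 → ℝ} (h : ξ ≠ 0) : 0 < dot3 ξ ξ := by
  obtain ⟨i, hi⟩ := Function.ne_iff.mp h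
  apply Finset.sum_pos'
  · intro j _; exact mul_self_nonneg _
  · exact ⟨i, Finset.mem_univ i, mul_self_pos.mpr hi⟩

/-- If w_{k₁}^{⊙l} ⊙ ξ^{⊙(m-l)}, …, w_{k_{l+1}}^{⊙l} ⊙ ξ^{⊙(m-l)} are linearly
independent, then the first of them is not a linear combination of the tensors
w_i^{⊙p} ⊙ ξ^{⊙(m-p)} with p ≠ l together with the remaining l of them. -/
theorem symMix_not_in_span (m l : ℕ) (hl2 : 2 ≤ l) (hlm : l ≤ m)
    (ξ : Fin 3 → ℝ) (hξ : ξ ≠ 0)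
    (w : Fin (m + 1) → Fin 3 → ℝ)
    (hperp : ∀ k, dot3 (w k) ξ = 0)
    (hpair : ∀ i j, i ≠ j → LinearIndependent ℝ ![w i, w j])
    (k : Fin (l + 1) → Fin (m + 1)) (hk : Function.Injective k)
    (hind : LinearIndependent ℝ (fun j : Fin (l + 1) => symMix m l (w (k j)) ξ)) :
    symMix m l (w (k 0)) ξ ∉
      Submodule.span ℝ
        ({f : (Fin 3 → ℝ) → ℝ | ∃ p ≤ m, p ≠ l ∧ ∃ i, f = symMix m p (w i) ξ} ∪
         {f : (Fin 3 → ℝ) → ℝ | ∃ j : Fin (l + 1), j ≠ 0 ∧ f = symMix m l (w (k j)) ξ}) := by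
  intro h
  have hQ : 0 < dot3 ξ ξ := dot3_self_pos hξ
  set Q : ℝ := dot3 ξ ξ with hQdef
  rw [Submodule.mem_span_set'] at h
  obtain ⟨n, c, g, hg⟩ := h
  have hstruct : ∀ i : Fin n, ∃ (p : ℕ) (u : Fin 3 → ℝ), p ≤ m ∧ dot3 u ξ = 0 ∧
      (g i : (Fin 3 → ℝ) → ℝ) = symMix m p u ξ ∧
      (p = l → ∃ j : Fin (l+1), j ≠ 0 ∧ u = w (k j)) := by
    intro i
    rcases (g i).2 with h1 | h2
    · obtain ⟨p, hpm, hpl, i', hf⟩ := h1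
      exact ⟨p, w i', hpm, hperp i', hf, fun h => absurd h hpl⟩
    · obtain ⟨j, hj0, hf⟩ := h2
      exact ⟨l, w (k j), hlm, hperp _, hf, fun _ => ⟨j, hj0, rfl⟩⟩
  choose p u hpm hup hgu hpl using hstruct
  -- key pointwise identity, obtained from the coefficient of s^(m-l)
  have key : ∀ y : Fin 3 → ℝ,
      (∑ i, (if p i = l then c i * (dot3 (u i) y) ^ l else 0))
        = (dot3 (w (k 0)) y) ^ l := by
    intro y
    set a : Fin 3 → ℝ := y - (dot3 ξ y / Q) • ξ with ha
    have hda : ∀ v : Fin 3 → ℝ, dot3 v ξ = 0 → ∀ s : ℝ, dot3 v (a + s • ξ) = dot3 v y := by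
      intro v hv s
      rw [dot3_add_right, dot3_smul_right, hv, ha, dot3_sub_right, dot3_smul_right, hv]
      ring
    have hdξ : ∀ s : ℝ, dot3 ξ (a + s • ξ) = s * Q := by
      intro s
      rw [dot3_add_right, dot3_smul_right, ha, dot3_sub_right, dot3_smul_right]
      field_simp
      rw [← hQdef]; ring
    have heval : ∀ s : ℝ,
        (∑ i, c i * ((dot3 (u i) y) ^ (p i) * (s * Q) ^ (m - p i)))
          = (dot3 (w (k 0)) y) ^ l * (s * Q) ^ (m - l) := by
      intro s
      have h1 := congrFun hg (a + s • ξ)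
      simp only [Finset.sum_apply, Pi.smul_apply, smul_eq_mul] at h1
      have h2 : ∀ i : Fin n, (g i : (Fin 3 → ℝ) → ℝ) (a + s • ξ)
          = (dot3 (u i) y) ^ (p i) * (s * Q) ^ (m - p i) := by
        intro i
        rw [hgu i]
        simp only [symMix]
        rw [hda (u i) (hup i) s, hdξ s]
      calc (∑ i, c i * ((dot3 (u i) y) ^ (p i) * (s * Q) ^ (m - p i)))
          = ∑ i, c i * (g i : (Fin 3 → ℝ) → ℝ) (a + s • ξ) := by
            apply Finset.sum_congr rfl; intro i _; rw [h2 i]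
        _ = symMix m l (w (k 0)) ξ (a + s • ξ) := h1
        _ = (dot3 (w (k 0)) y) ^ l * (s * Q) ^ (m - l) := by
            simp only [symMix]
            rw [hda _ (hperp (k 0)) s, hdξ s]
    -- turn it into a polynomial identity
    have hpoly :
        (∑ i, Polynomial.C (c i * (dot3 (u i) y) ^ (p i) * Q ^ (m - p i))
            * Polynomial.X ^ (m - p i) : Polynomial ℝ)
          = Polynomial.C ((dot3 (w (k 0)) y) ^ l * Q ^ (m - l)) * Polynomial.X ^ (m - l) := by
      apply Polynomial.funext
      intro s
      have := heval s
      simp only [Polynomial.eval_finset_sum, Polynomial.eval_mul, Polynomial.eval_C,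
        Polynomial.eval_pow, Polynomial.eval_X]
      calc (∑ i, c i * (dot3 (u i) y) ^ (p i) * Q ^ (m - p i) * s ^ (m - p i))
          = ∑ i, c i * ((dot3 (u i) y) ^ (p i) * (s * Q) ^ (m - p i)) := by
            apply Finset.sum_congr rfl; intro i _; rw [mul_pow]; ring
        _ = (dot3 (w (k 0)) y) ^ l * (s * Q) ^ (m - l) := this
        _ = (dot3 (w (k 0)) y) ^ l * Q ^ (m - l) * s ^ (m - l) := by rw [mul_pow]; ring
    have hco := congrArg (fun P : Polynomial ℝ => P.coeff (m - l)) hpoly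
    simp only [Polynomial.finset_sum_coeff, Polynomial.coeff_C_mul,
      Polynomial.coeff_X_pow] at hco
    have hcond : ∀ i : Fin n, (m - l = m - p i) ↔ (p i = l) := by
      intro i
      constructor
      · intro hh; have := hpm i; omega
      · intro hh; rw [hh]
    have hQl : (Q : ℝ) ^ (m - l) ≠ 0 := pow_ne_zero _ hQ.ne'
    apply mul_right_cancel₀ hQl
    rw [Finset.sum_mul]
    calc (∑ i, (if p i = l then c i * (dot3 (u i) y) ^ l else 0) * Q ^ (m - l))
        = ∑ i, c i * (dot3 (u i) y) ^ (p i) * Q ^ (m - p i)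
            * (if m - l = m - p i then 1 else 0) := by
          apply Finset.sum_congr rfl
          intro i _
          by_cases hi : p i = l
          · rw [if_pos hi, if_pos ((hcond i).mpr hi), hi]; ring
          · rw [if_neg hi, if_neg (fun hh => hi ((hcond i).mp hh))]; ring
      _ = (dot3 (w (k 0)) y) ^ l * Q ^ (m - l) * 1 := hco
      _ = (dot3 (w (k 0)) y) ^ l * Q ^ (m - l) := by ring
  -- assemble the contradiction with linear independence
  have hfinal : symMix m l (w (k 0)) ξ
      = ∑ i, (if p i = l then c i else 0) • symMix m l (u i) ξ := by
    funext y
    simp only [Finset.sum_apply, Pi.smul_apply, smul_eq_mul, symMix]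
    rw [← key y, Finset.sum_mul]
    apply Finset.sum_congr rfl
    intro i _
    by_cases hi : p i = l
    · rw [if_pos hi, if_pos hi]; ring
    · rw [if_neg hi, if_neg hi]; ring
  have hmem : symMix m l (w (k 0)) ξ ∈ Submodule.span ℝ
      ((fun j : Fin (l + 1) => symMix m l (w (k j)) ξ) '' {j | j ≠ 0}) := by
    rw [hfinal]
    apply Submodule.sum_mem
    intro i _
    by_cases hi : p i = l
    · obtain ⟨j, hj0, huj⟩ := hpl i hi
      rw [if_pos hi, huj]
      exact Submodule.smul_mem _ _ (Submodule.subset_span ⟨j, hj0, rfl⟩)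
    · rw [if_neg hi, zero_smul]
      exact Submodule.zero_mem _
  exact hind.notMem_span_image (by simp) hmem
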